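/- Let X_1, …, X_n be non-positively correlated {0,1}-valued random variables (i.e., for every subset S, Pr[∀i∈S: X_i = 1] ≤ ∏_{i∈S} Pr[X_i = 1]), and X = Σ X_i. Then for any δ ≥ 0, Pr[X ≥ (1+δ)E[X]] ≤ (e^δ/(1+δ)^(1+δ))^{E[X]}. -/

import Mathlib

open MeasureTheory Finset Real

/-- Chernoff bound for non-positively correlated {0,1}-valued random variables:
    if for every subset S, Pr[∀ i ∈ S, X_i = 1] ≤ ∏_{i∈S} Pr[X_i = 1], then for δ ≥ 0,
    Pr[X ≥ (1+δ)E[X]] ≤ (e^δ/(1+δ)^(1+δ))^{E[X]}, where X = Σ X_i. -/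
theorem chernoff_nonpositively_correlated {Ω : Type*} [MeasurableSpace Ω]
    (μ : Measure Ω) [IsProbabilityMeasure μ] (n : ℕ) (X : Fin n → Ω → ℝ)
    (hmeas : ∀ i, Measurable (X i))
    (hbool : ∀ i ω, X i ω = 0 ∨ X i ω = 1)
    (hcorr : ∀ S : Finset (Fin n),
      (μ {ω | ∀ i ∈ S, X i ω = 1}).toReal ≤ ∏ i ∈ S, (μ {ω | X i ω = 1}).toReal)
    (δ : ℝ) (hδ : 0 ≤ δ) :
    (μ {ω | (1 + δ) * (∑ i, ∫ ω', X i ω' ∂μ) ≤ ∑ i, X i ω}).toReal ≤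
      (Real.exp δ / (1 + δ) ^ (1 + δ)) ^ (∑ i, ∫ ω', X i ω' ∂μ) := by
  classical
  have h1δ : (0:ℝ) < 1 + δ := by linarith
  set t := Real.log (1 + δ) with ht_def
  have ht0 : 0 ≤ t := Real.log_nonneg (by linarith)
  have hexp_t : Real.exp t = 1 + δ := Real.exp_log h1δ
  set p : Fin n → ℝ := fun i => (μ {ω | X i ω = 1}).toReal with hp_def
  have hp0 : ∀ i, 0 ≤ p i := fun i => ENNReal.toReal_nonneg
  -- measurability of the intersection sets
  have hsetmeas : ∀ T : Finset (Fin n), MeasurableSet {ω | ∀ i ∈ T, X i ω = 1} := by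
    intro T
    have h : {ω | ∀ i ∈ T, X i ω = 1} = ⋂ i ∈ T, {ω | X i ω = 1} := by
      ext ω; simp
    rw [h]
    exact MeasurableSet.biInter T.countable_toSet
      (fun i _ => (hmeas i) (measurableSet_singleton 1))
  -- products of the X i are indicators
  have hprod_ind : ∀ (T : Finset (Fin n)) (ω : Ω), (∏ i ∈ T, X i ω) =
      Set.indicator {ω | ∀ i ∈ T, X i ω = 1} (fun _ => (1:ℝ)) ω := by
    intro T ω
    by_cases h : ∀ i ∈ T, X i ω = 1
    · rw [Set.indicator_of_mem (show ω ∈ {ω | ∀ i ∈ T, X i ω = 1} from h),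
        Finset.prod_eq_one h]
    · rw [Set.indicator_of_notMem (show ω ∉ {ω | ∀ i ∈ T, X i ω = 1} from h)]
      push_neg at h
      obtain ⟨i, hi, hne⟩ := h
      exact Finset.prod_eq_zero hi ((hbool i ω).resolve_right hne)
  have hIndInt : ∀ T : Finset (Fin n), Integrable (fun ω => ∏ i ∈ T, X i ω) μ := fun T =>
    ((integrable_const (1:ℝ)).indicator (hsetmeas T)).congr
      (Filter.Eventually.of_forall fun ω => (hprod_ind T ω).symm)
  have hint_prod : ∀ T : Finset (Fin n),
      ∫ ω, ∏ i ∈ T, X i ω ∂μ = (μ {ω | ∀ i ∈ T, X i ω = 1}).toReal := by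
    intro T
    simp_rw [hprod_ind T]
    rw [integral_indicator_const (1:ℝ) (hsetmeas T), smul_eq_mul, mul_one]
    rfl
  -- expectation of each X i
  have hint_X : ∀ i, ∫ ω, X i ω ∂μ = p i := by
    intro i
    have h1 := hint_prod {i}
    simp only [Finset.prod_singleton] at h1
    rw [h1]
    congr 2
    ext ω; simp
  set m : ℝ := ∑ i, ∫ ω', X i ω' ∂μ with hm_def
  have hm : m = ∑ i, p i := Finset.sum_congr rfl fun i _ => hint_X i
  have hm0 : 0 ≤ m := by
    rw [hm]; exact Finset.sum_nonneg fun i _ => hp0 i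
  -- pointwise expansion of exp(t * sum)
  have hpoint : ∀ ω, Real.exp (t * ∑ i, X i ω) =
      ∑ T ∈ (Finset.univ : Finset (Fin n)).powerset, δ ^ T.card * ∏ i ∈ T, X i ω := by
    intro ω
    rw [Finset.mul_sum, Real.exp_sum]
    have h : ∀ i ∈ (Finset.univ : Finset (Fin n)), Real.exp (t * X i ω) = δ * X i ω + 1 := by
      intro i _
      rcases hbool i ω with h | h
      · simp [h]
      · rw [h, mul_one, hexp_t, mul_one]; ring
    rw [Finset.prod_congr rfl h, Finset.prod_add]
    refine Finset.sum_congr rfl fun T _ => ?_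
    simp [Finset.prod_mul_distrib, Finset.prod_const, mul_comm]
  have hInt : Integrable (fun ω => Real.exp (t * ∑ i, X i ω)) μ := by
    have h : Integrable (fun ω =>
        ∑ T ∈ (Finset.univ : Finset (Fin n)).powerset, δ ^ T.card * ∏ i ∈ T, X i ω) μ :=
      integrable_finset_sum _ (fun T _ => (hIndInt T).const_mul _)
    exact h.congr (Filter.Eventually.of_forall fun ω => (hpoint ω).symm)
  -- bound the mgf
  have hmgf : ProbabilityTheory.mgf (fun ω => ∑ i, X i ω) μ t ≤ Real.exp (δ * m) := by
    have h1 : ProbabilityTheory.mgf (fun ω => ∑ i, X i ω) μ t =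
        ∑ T ∈ (Finset.univ : Finset (Fin n)).powerset,
          δ ^ T.card * (μ {ω | ∀ i ∈ T, X i ω = 1}).toReal := by
      unfold ProbabilityTheory.mgf
      simp_rw [hpoint]
      rw [integral_finset_sum _ (fun T _ => (hIndInt T).const_mul _)]
      refine Finset.sum_congr rfl fun T _ => ?_
      rw [integral_const_mul, hint_prod]
    have h2 : (∑ T ∈ (Finset.univ : Finset (Fin n)).powerset,
          δ ^ T.card * (μ {ω | ∀ i ∈ T, X i ω = 1}).toReal) ≤
        ∑ T ∈ (Finset.univ : Finset (Fin n)).powerset, δ ^ T.card * ∏ i ∈ T, p i := by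
      refine Finset.sum_le_sum fun T _ => ?_
      exact mul_le_mul_of_nonneg_left (hcorr T) (pow_nonneg hδ _)
    have h3 : (∑ T ∈ (Finset.univ : Finset (Fin n)).powerset, δ ^ T.card * ∏ i ∈ T, p i) =
        ∏ i, (δ * p i + 1) := by
      rw [Finset.prod_add]
      refine (Finset.sum_congr rfl fun T _ => ?_).symm
      simp [Finset.prod_mul_distrib, Finset.prod_const, mul_comm]
    have h4 : (∏ i, (δ * p i + 1)) ≤ ∏ i, Real.exp (δ * p i) := by
      refine Finset.prod_le_prod (fun i _ => ?_) (fun i _ => Real.add_one_le_exp _)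
      positivity
    have h5 : (∏ i, Real.exp (δ * p i)) = Real.exp (δ * m) := by
      rw [← Real.exp_sum, ← Finset.mul_sum, hm]
    rw [h1]
    calc _ ≤ _ := h2
      _ = _ := h3
      _ ≤ _ := h4
      _ = _ := h5
  -- Chernoff via Markov
  have hmain := ProbabilityTheory.measure_ge_le_exp_mul_mgf (X := fun ω => ∑ i, X i ω)
    (μ := μ) ((1 + δ) * m) ht0 hInt
  refine hmain.trans ?_
  have hR : (Real.exp δ / (1 + δ) ^ (1 + δ)) ^ m = Real.exp ((δ - (1 + δ) * t) * m) := by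
    rw [Real.rpow_def_of_pos h1δ, ← Real.exp_sub,
      Real.rpow_def_of_pos (Real.exp_pos _), Real.log_exp]
    rw [ht_def]
    ring_nf
  rw [hR]
  calc Real.exp (-t * ((1 + δ) * m)) * ProbabilityTheory.mgf (fun ω => ∑ i, X i ω) μ t
      ≤ Real.exp (-t * ((1 + δ) * m)) * Real.exp (δ * m) :=
        mul_le_mul_of_nonneg_left hmgf (Real.exp_nonneg _)
    _ = Real.exp ((δ - (1 + δ) * t) * m) := by rw [← Real.exp_add]; ring_nf
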